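/- Let S be a finite non-empty multiset of natural numbers and let B be a finite mixed radix base with ∏B > max(S). Let B' be the base obtained by removing the last element of B. Then the sum over all v in S of the sum of digits of v in base B equals the corresponding sum for B'. Consequently, S has an optimal base (minimizing sum of digits) among bases B with ∏B ≤ max(S). -/

import Mathlib

/-- The weight of digit position `i` in mixed radix base `B`: product of the first `i` radices. -/
def weight (B : List ℕ) (i : ℕ) : ℕ := (B.take i).prod

/-- The `i`-th digit of `v` in mixed radix base `B` (the most significant digit, at
position `B.length`, is `v / B.prod` and is unbounded). -/
def digit (B : List ℕ) (v i : ℕ) : ℕ :=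
  if i < B.length then (v / weight B i) % B.getD i 1 else v / B.prod

/-- The sum of the digits of `v` in base `B`. -/
def digitSum (B : List ℕ) (v : ℕ) : ℕ :=
  ∑ i ∈ Finset.range (B.length + 1), digit B v i

/-- The sum of digits of all elements of the multiset `S` in base `B`. -/
def sumDigits (S : Multiset ℕ) (B : List ℕ) : ℕ :=
  (S.map (digitSum B)).sum

lemma digitSum_concat (B' : List ℕ) (r : ℕ) (hP : 0 < B'.prod) (v : ℕ)
    (hv : v < (B' ++ [r]).prod) :
    digitSum (B' ++ [r]) v = digitSum B' v := by
  have hprod : (B' ++ [r]).prod = B'.prod * r := by simp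
  have hr : 0 < r := by
    rcases Nat.eq_zero_or_pos r with h | h
    · rw [hprod, h, Nat.mul_zero] at hv; omega
    · exact h
  have hdiv : v / B'.prod < r := by
    rw [Nat.div_lt_iff_lt_mul hP, Nat.mul_comm]
    rwa [hprod] at hv
  have h1 : ∀ i < B'.length, digit (B' ++ [r]) v i = digit B' v i := by
    intro i hi
    have ht : (B' ++ [r]).take i = B'.take i :=
      List.take_append_of_le_length (Nat.le_of_lt hi)
    have hg : (B' ++ [r]).getD i 1 = B'.getD i 1 := List.getD_append _ _ _ _ hi
    simp only [digit, weight, ht, hg, List.length_append, List.length_singleton,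
      if_pos hi, if_pos (Nat.lt_succ_of_lt hi)]
  have h2 : digit (B' ++ [r]) v B'.length = v / B'.prod := by
    have ht : (B' ++ [r]).take B'.length = B' := List.take_left
    have hg : (B' ++ [r]).getD B'.length 1 = r := by
      rw [List.getD_append_right _ _ _ _ le_rfl]
      simp
    simp [digit, weight, ht, hg, Nat.mod_eq_of_lt hdiv]
  have h3 : digit (B' ++ [r]) v (B'.length + 1) = 0 := by
    have hv' : v < B'.prod * r := by rwa [hprod] at hv
    simp [digit, Nat.div_eq_of_lt hv']
  have h4 : digit B' v B'.length = v / B'.prod := by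
    simp [digit]
  unfold digitSum
  rw [List.length_append, List.length_singleton, Finset.sum_range_succ,
    Finset.sum_range_succ (f := digit (B' ++ [r]) v), Finset.sum_range_succ (f := digit B' v),
    h2, h3, h4, Nat.add_zero]
  congr 1
  exact Finset.sum_congr rfl fun i hi => h1 i (Finset.mem_range.mp hi)

lemma sumDigits_concat (S : Multiset ℕ) (m : ℕ) (hmax : ∀ x ∈ S, x ≤ m)
    (B' : List ℕ) (r : ℕ) (hP : 0 < B'.prod) (hprod : m < (B' ++ [r]).prod) :
    sumDigits S (B' ++ [r]) = sumDigits S B' := by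
  unfold sumDigits
  congr 1
  exact Multiset.map_congr rfl fun v hv =>
    digitSum_concat B' r hP v (lt_of_le_of_lt (hmax v hv) hprod)

lemma trunc (S : Multiset ℕ) (m : ℕ) (hm : 0 < m) (hmax : ∀ x ∈ S, x ≤ m)
    (B : List ℕ) (hB : ∀ x ∈ B, 2 ≤ x) :
    ∃ B₀ : List ℕ, (∀ x ∈ B₀, 2 ≤ x) ∧ B₀.prod ≤ m ∧ sumDigits S B₀ = sumDigits S B := by
  induction B using List.reverseRecOn with
  | nil => exact ⟨[], by simp, by simp; omega, rfl⟩
  | append_singleton B' r ih =>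
    by_cases hp : (B' ++ [r]).prod ≤ m
    · exact ⟨B' ++ [r], hB, hp, rfl⟩
    · have hB' : ∀ x ∈ B', 2 ≤ x := fun x hx => hB x (List.mem_append_left _ hx)
      have hP : 0 < B'.prod := List.prod_pos fun x hx => by have := hB' x hx; omega
      obtain ⟨B₀, h1, h2, h3⟩ := ih hB'
      exact ⟨B₀, h1, h2, h3.trans (sumDigits_concat S m hmax B' r hP (by omega)).symm⟩

theorem stmt5 (S : Multiset ℕ) (hS : S ≠ 0) (m : ℕ) (hm : 0 < m)
    (hmem : m ∈ S) (hmax : ∀ x ∈ S, x ≤ m)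
    (B' : List ℕ) (r : ℕ) (hB : ∀ x ∈ B' ++ [r], 2 ≤ x)
    (hprod : m < (B' ++ [r]).prod) :
    sumDigits S (B' ++ [r]) = sumDigits S B' ∧
    ∃ B₀ : List ℕ, (∀ x ∈ B₀, 2 ≤ x) ∧ B₀.prod ≤ m ∧
      ∀ B₁ : List ℕ, (∀ x ∈ B₁, 2 ≤ x) → sumDigits S B₀ ≤ sumDigits S B₁ := by
  have hP : 0 < B'.prod :=
    List.prod_pos fun x hx => by have := hB x (List.mem_append_left _ hx); omega
  refine ⟨sumDigits_concat S m hmax B' r hP hprod, ?_⟩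
  set T : Set ℕ := {n | ∃ B₀ : List ℕ, (∀ x ∈ B₀, 2 ≤ x) ∧ B₀.prod ≤ m ∧ sumDigits S B₀ = n}
    with hT
  have hne : T.Nonempty := ⟨sumDigits S [], [], by simp, by simp; omega, rfl⟩
  obtain ⟨B₀, hB₀, hBp, hBs⟩ := Nat.sInf_mem hne
  refine ⟨B₀, hB₀, hBp, fun B₁ hB₁ => ?_⟩
  obtain ⟨B₂, h1, h2, h3⟩ := trunc S m hm hmax B₁ hB₁
  rw [hBs, ← h3]
  exact Nat.sInf_le ⟨B₂, h1, h2, rfl⟩
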